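/- (Uniqueness half of the sewing lemma, with the bound) If z > 1, R ∈ ΩC^z, and A = NR satisfies A = Σᵢ Aᵢ with Aᵢ ∈ ΩC₂^{ρᵢ, z-ρᵢ}, 0 < ρᵢ < z, then ‖R‖_z ≤ (1/(2^z - 2)) Σᵢ ‖Aᵢ‖_{ρᵢ, z-ρᵢ}. (Proof by dyadic midpoint splitting: R_{st} = R_{ut} + R_{su} + A_{sut} with u the midpoint of [s,t].) -/

import Mathlib

open Finset

/-- Uniqueness half of the sewing lemma with the quantitative bound: if `z > 1`,
`R ∈ ΩC^z` and `N R = ∑ᵢ Aᵢ` with `Aᵢ ∈ ΩC₂^{ρᵢ, z-ρᵢ}`, `0 < ρᵢ < z`, then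
`‖R‖_z ≤ (1/(2^z - 2)) ∑ᵢ ‖Aᵢ‖_{ρᵢ, z-ρᵢ}`. -/
theorem sewing_uniqueness_bound (z : ℝ) (hz : 1 < z) (n : ℕ)
    (ρ M : Fin n → ℝ) (A : Fin n → ℝ → ℝ → ℝ → ℝ)
    (hρ : ∀ i, 0 < ρ i ∧ ρ i < z) (hM : ∀ i, 0 ≤ M i)
    (hA : ∀ (i : Fin n) (s u t : ℝ),
        |A i s u t| ≤ M i * |u - s| ^ (ρ i) * |t - u| ^ (z - ρ i))
    (R : ℝ → ℝ → ℝ) (K : ℝ)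
    (hR : ∀ s t : ℝ, |R s t| ≤ K * |t - s| ^ z)
    (hNR : ∀ s u t : ℝ, R s t - R u t - R s u = ∑ i, A i s u t) :
    ∀ s t : ℝ, |R s t| ≤ (1 / ((2 : ℝ) ^ z - 2)) * (∑ i, M i) * |t - s| ^ z := by
  have h2z : (2 : ℝ) < 2 ^ z := by
    calc (2 : ℝ) = 2 ^ (1 : ℝ) := (Real.rpow_one 2).symm
    _ < 2 ^ z := by
      exact (Real.rpow_lt_rpow_left_iff one_lt_two).2 hz
  have h2zpos : (0 : ℝ) < 2 ^ z := lt_trans two_pos h2z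
  have hsub : (0 : ℝ) < 2 ^ z - 2 := sub_pos.2 h2z
  set q : ℝ := 2 / 2 ^ z with hqdef
  have hq0 : 0 < q := by positivity
  have hq1 : q < 1 := (div_lt_one h2zpos).2 h2z
  have hK : 0 ≤ K := by
    have h01 := hR 0 1
    have : |(1 : ℝ) - 0| ^ z = 1 := by norm_num
    have h01' : |R 0 1| ≤ K := by rw [this, mul_one] at h01; exact h01
    exact le_trans (abs_nonneg _) h01'
  have hS : 0 ≤ ∑ i, M i := Finset.sum_nonneg fun i _ => hM i
  set L : ℝ := (1 / (2 ^ z - 2)) * ∑ i, M i with hLdef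
  have hL0 : 0 ≤ L := mul_nonneg (by positivity) hS
  have key : ∀ n : ℕ, ∀ s t : ℝ,
      |R s t| ≤ (q ^ n * K + (1 - q ^ n) * L) * |t - s| ^ z := by
    intro m
    induction m with
    | zero => intro s t; simpa using hR s t
    | succ m ih =>
      intro s t
      set u := (s + t) / 2 with hu
      have hd : |u - s| = |t - s| / 2 := by
        rw [show u - s = (t - s) / 2 by rw [hu]; ring, abs_div]; norm_num
      have hd' : |t - u| = |t - s| / 2 := by
        rw [show t - u = (t - s) / 2 by rw [hu]; ring, abs_div]; norm_num
      have hhalf : (|t - s| / 2) ^ z = |t - s| ^ z / 2 ^ z :=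
        Real.div_rpow (abs_nonneg _) (by norm_num : (0:ℝ) ≤ 2) z
      have hAi : ∀ i, |A i s u t| ≤ M i * (|t - s| ^ z / 2 ^ z) := by
        intro i
        calc |A i s u t| ≤ M i * |u - s| ^ (ρ i) * |t - u| ^ (z - ρ i) := hA i s u t
          _ = M i * ((|t - s| / 2) ^ (ρ i) * (|t - s| / 2) ^ (z - ρ i)) := by
              rw [hd, hd', mul_assoc]
          _ = M i * (|t - s| / 2) ^ z := by
              rw [← Real.rpow_add' (by positivity) (by simp; linarith)]
              ring_nf
          _ = M i * (|t - s| ^ z / 2 ^ z) := by rw [hhalf]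
      have heq : R s t = R u t + R s u + ∑ i, A i s u t := by
        have := hNR s u t; linarith
      set C : ℝ := q ^ m * K + (1 - q ^ m) * L with hC
      have h1 : |R u t| ≤ C * (|t - s| ^ z / 2 ^ z) := by
        have := ih u t; rw [hd', hhalf] at this; exact this
      have h2 : |R s u| ≤ C * (|t - s| ^ z / 2 ^ z) := by
        have := ih s u; rw [hd, hhalf] at this; exact this
      have h3 : |∑ i, A i s u t| ≤ (∑ i, M i) * (|t - s| ^ z / 2 ^ z) := by
        calc |∑ i, A i s u t| ≤ ∑ i, |A i s u t| := Finset.abs_sum_le_sum_abs _ _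
          _ ≤ ∑ i, M i * (|t - s| ^ z / 2 ^ z) :=
              Finset.sum_le_sum fun i _ => hAi i
          _ = (∑ i, M i) * (|t - s| ^ z / 2 ^ z) := by rw [Finset.sum_mul]
      have htri : |R s t| ≤ |R u t| + |R s u| + |∑ i, A i s u t| := by
        rw [heq]; exact le_trans (abs_add_le _ _) (add_le_add_left (abs_add_le _ _) _)
      have hbound : |R s t| ≤ (2 * C + ∑ i, M i) * (|t - s| ^ z / 2 ^ z) := by
        calc |R s t| ≤ |R u t| + |R s u| + |∑ i, A i s u t| := htri
          _ ≤ C * (|t - s| ^ z / 2 ^ z) + C * (|t - s| ^ z / 2 ^ z)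
              + (∑ i, M i) * (|t - s| ^ z / 2 ^ z) := by
              exact add_le_add (add_le_add h1 h2) h3
          _ = (2 * C + ∑ i, M i) * (|t - s| ^ z / 2 ^ z) := by ring
      have hrec : (2 * C + ∑ i, M i) * (|t - s| ^ z / 2 ^ z)
          = (q ^ (m + 1) * K + (1 - q ^ (m + 1)) * L) * |t - s| ^ z := by
        have hLS : L * (2 ^ z - 2) = ∑ i, M i := by
          rw [hLdef]; field_simp
        have hq2 : q * 2 ^ z = 2 := by rw [hqdef]; field_simp
        have hmain : 2 * C + ∑ i, M i
            = (q ^ (m + 1) * K + (1 - q ^ (m + 1)) * L) * 2 ^ z := by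
          rw [hC]
          linear_combination -hLS + (q ^ m * L - q ^ m * K) * hq2
        rw [hmain]
        field_simp
      rw [hrec] at hbound
      exact hbound
  intro s t
  have hlim : Filter.Tendsto (fun m : ℕ => (q ^ m * K + (1 - q ^ m) * L) * |t - s| ^ z)
      Filter.atTop (nhds ((0 * K + (1 - 0) * L) * |t - s| ^ z)) := by
    have hq : Filter.Tendsto (fun m : ℕ => q ^ m) Filter.atTop (nhds 0) :=
      tendsto_pow_atTop_nhds_zero_of_lt_one hq0.le hq1
    exact (((hq.mul_const K).add ((tendsto_const_nhds.sub hq).mul_const L)).mul_const _)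
  have := ge_of_tendsto hlim (Filter.Eventually.of_forall fun m => key m s t)
  calc |R s t| ≤ (0 * K + (1 - 0) * L) * |t - s| ^ z := this
    _ = (1 / (2 ^ z - 2)) * (∑ i, M i) * |t - s| ^ z := by rw [hLdef]; ring
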